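/- For every n, a graph G is n-edge bottlenecked if and only if every minor of G is n-edge bottlenecked. -/

import Mathlib

open SimpleGraph

variable {V : Type}

/-- A set of vertices is connected if the induced subgraph is connected. -/
def ConnSet (G : SimpleGraph V) (X : Set V) : Prop := (G.induce X).Connected

/-- `G` is `n`-edge bottlenecked: any two disjoint connected vertex sets `X,Y`
admit a set of at most `n` edges meeting every `X,Y` path. -/
def EdgeBottlenecked (G : SimpleGraph V) (n : ℕ) : Prop :=
  ∀ X Y : Set V, Disjoint X Y → ConnSet G X → ConnSet G Y →
    ∃ S : Finset (Sym2 V), S.card ≤ n ∧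
      ∀ ⦃x y : V⦄ (p : G.Walk x y), x ∈ X → y ∈ Y → p.IsPath → ∃ e ∈ S, e ∈ p.edges

/-- `G` is `n`-point bottlenecked: any two disjoint connected vertex sets `X,Y`
admit a set of at most `n` vertices meeting every `X,Y` path. -/
def PointBottlenecked (G : SimpleGraph V) (n : ℕ) : Prop :=
  ∀ X Y : Set V, Disjoint X Y → ConnSet G X → ConnSet G Y →
    ∃ S : Finset V, S.card ≤ n ∧
      ∀ ⦃x y : V⦄ (p : G.Walk x y), x ∈ X → y ∈ Y → p.IsPath → ∃ v ∈ S, v ∈ p.support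

/-- An `n`-ladder: two disjoint connected poles `X,Y` and `n` rungs, i.e. `X,Y`
paths that are pairwise disjoint outside of `X ∪ Y`. -/
structure Ladder (G : SimpleGraph V) (n : ℕ) where
  X : Set V
  Y : Set V
  disj : Disjoint X Y
  connX : ConnSet G X
  connY : ConnSet G Y
  a : Fin n → V
  b : Fin n → V
  ha : ∀ i, a i ∈ X
  hb : ∀ i, b i ∈ Y
  p : (i : Fin n) → G.Walk (a i) (b i)
  isPath : ∀ i, (p i).IsPath
  rungsDisj : ∀ i j, i ≠ j → ∀ v, v ∈ (p i).support → v ∈ (p j).support → v ∈ X ∪ Y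

/-- `G` contains the dipole `D_k` as a minor: equivalently, `G` contains a `k`-ladder. -/
def HasDipoleMinor (G : SimpleGraph V) (k : ℕ) : Prop := Nonempty (Ladder G k)

/-- Two vertex sets are `M`-disjoint if every pair of points (one from each) is at
graph distance at least `M`. -/
def MDisjoint (G : SimpleGraph V) (M : ℕ) (X Y : Set V) : Prop :=
  ∀ x ∈ X, ∀ y ∈ Y, M ≤ G.dist x y

/-- `G` is `M`-fat `n`-bottlenecked: any two connected `M`-disjoint sets `X,Y` admit
at most `n` vertices (outside `X ∪ Y`) whose open `M`-neighborhood meets every `X,Y` path. -/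
def FatBottlenecked (G : SimpleGraph V) (M n : ℕ) : Prop :=
  ∀ X Y : Set V, ConnSet G X → ConnSet G Y → MDisjoint G M X Y →
    ∃ S : Finset V, S.card ≤ n ∧ (∀ s ∈ S, s ∉ X ∪ Y) ∧
      ∀ ⦃x y : V⦄ (p : G.Walk x y), x ∈ X → y ∈ Y → p.IsPath →
        ∃ v ∈ p.support, ∃ s ∈ S, G.dist v s < M

/-- An `M`-fat `n`-ladder: an `n`-ladder whose poles are `M`-disjoint and whose
rungs are pairwise `M`-disjoint. -/
structure FatLadder (G : SimpleGraph V) (M n : ℕ) extends Ladder G n where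
  polesFat : MDisjoint G M X Y
  rungsFat : ∀ i j, i ≠ j → ∀ u v, u ∈ (p i).support → v ∈ (p j).support → M ≤ G.dist u v

/-- `H` is a minor of `G`: branch sets in `G` (nonempty, connected, pairwise disjoint)
realize the vertices of `H`, and every edge of `H` is realized by an edge of `G`. -/
def IsMinor {W : Type} (G : SimpleGraph V) (H : SimpleGraph W) : Prop :=
  ∃ B : W → Set V, (∀ w, (B w).Nonempty) ∧ (∀ w, ConnSet G (B w)) ∧
    (∀ w w', w ≠ w' → Disjoint (B w) (B w')) ∧
    (∀ ⦃w w'⦄, H.Adj w w' → ∃ u ∈ B w, ∃ v ∈ B w', G.Adj u v)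

/-- `H` is an `M`-fat minor of `G`: a minor whose branch sets are pairwise `M`-disjoint
except where incident (adjacent) in `H`. -/
def IsFatMinor (G : SimpleGraph V) (M : ℕ) {W : Type} (H : SimpleGraph W) : Prop :=
  ∃ B : W → Set V, (∀ w, (B w).Nonempty) ∧ (∀ w, ConnSet G (B w)) ∧
    (∀ w w', w ≠ w' → Disjoint (B w) (B w')) ∧
    (∀ w w', w ≠ w' → ¬ H.Adj w w' → MDisjoint G M (B w) (B w')) ∧
    (∀ ⦃w w'⦄, H.Adj w w' → ∃ u ∈ B w, ∃ v ∈ B w', G.Adj u v)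

section BottleneckHelpers

variable {α : Type} {Γ : SimpleGraph α}

/-- Walk-based connectivity of a vertex set. -/
def WConn (Γ : SimpleGraph α) (s : Set α) : Prop :=
  s.Nonempty ∧ ∀ u ∈ s, ∀ v ∈ s, ∃ p : Γ.Walk u v, ∀ x ∈ p.support, x ∈ s

lemma walk_of_induceWalk {s : Set α} :
    ∀ {a b : ↥s} (_q : (Γ.induce s).Walk a b),
      ∃ p : Γ.Walk a.1 b.1, ∀ x ∈ p.support, x ∈ s := by
  intro a b q
  induction q with
  | nil =>
    exact ⟨SimpleGraph.Walk.nil, fun x hx => by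
      rw [SimpleGraph.Walk.support_nil, List.mem_singleton] at hx
      subst hx; exact Subtype.coe_prop _⟩
  | cons h q ih =>
    obtain ⟨p, hp⟩ := ih
    refine ⟨SimpleGraph.Walk.cons h p, ?_⟩
    intro x hx
    change x ∈ _ :: p.support at hx
    rcases List.mem_cons.mp hx with rfl | hx
    · exact Subtype.coe_prop _
    · exact hp x hx

lemma reachable_induce_of_walk {s : Set α} :
    ∀ {a b : α} (p : Γ.Walk a b), (∀ x ∈ p.support, x ∈ s) →
      ∀ (ha : a ∈ s) (hb : b ∈ s), (Γ.induce s).Reachable ⟨a, ha⟩ ⟨b, hb⟩ := by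
  intro a b p
  induction p with
  | nil => intro _ ha hb; exact SimpleGraph.Reachable.refl _
  | cons h q ih =>
    intro hs ha hb
    have hc : _ ∈ s := hs _ (by rw [SimpleGraph.Walk.support_cons]; exact List.mem_cons_of_mem _ q.start_mem_support)
    have h1 : (Γ.induce s).Adj ⟨_, ha⟩ ⟨_, hc⟩ := h
    exact h1.reachable.trans (ih (fun x hx => hs x (by rw [SimpleGraph.Walk.support_cons]; exact List.mem_cons_of_mem _ hx)) hc hb)

lemma wconn_iff (Γ : SimpleGraph α) (s : Set α) :
    (Γ.induce s).Connected ↔ WConn Γ s := by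
  constructor
  · intro hc
    obtain ⟨⟨v, hv⟩⟩ := hc.nonempty
    refine ⟨⟨v, hv⟩, ?_⟩
    intro u hu w hw
    obtain ⟨q⟩ := hc.preconnected ⟨u, hu⟩ ⟨w, hw⟩
    exact walk_of_induceWalk q
  · rintro ⟨⟨v, hv⟩, hcon⟩
    rw [SimpleGraph.connected_iff]
    refine ⟨?_, ⟨⟨v, hv⟩⟩⟩
    rintro ⟨a, ha⟩ ⟨b, hb⟩
    obtain ⟨p, hp⟩ := hcon a ha b hb
    exact reachable_induce_of_walk p hp ha hb

lemma wconn_union {ι : Type} {C : Set α} {t : ι → Set α} {I : Set ι}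
    (hC : WConn Γ C) (ht : ∀ i ∈ I, WConn Γ (t i)) (hmeet : ∀ i ∈ I, (t i ∩ C).Nonempty) :
    WConn Γ (C ∪ ⋃ i ∈ I, t i) := by
  have hCs : C ⊆ C ∪ ⋃ i ∈ I, t i := Set.subset_union_left
  have reach : ∀ u ∈ C ∪ ⋃ i ∈ I, t i, ∃ u₀ ∈ C,
      ∃ p : Γ.Walk u u₀, ∀ x ∈ p.support, x ∈ C ∪ ⋃ i ∈ I, t i := by
    intro u hu
    rcases hu with hu | hu
    · refine ⟨u, hu, SimpleGraph.Walk.nil, ?_⟩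
      intro x hx
      rw [SimpleGraph.Walk.support_nil, List.mem_singleton] at hx
      subst hx; exact hCs hu
    · obtain ⟨i, hi, hui⟩ := Set.mem_iUnion₂.mp hu
      obtain ⟨u₀, hu₀t, hu₀C⟩ := hmeet i hi
      obtain ⟨p, hp⟩ := (ht i hi).2 u hui u₀ hu₀t
      exact ⟨u₀, hu₀C, p, fun x hx => Or.inr (Set.mem_biUnion hi (hp x hx))⟩
  obtain ⟨⟨c0, hc0⟩, hCw⟩ := hC
  refine ⟨⟨c0, hCs hc0⟩, ?_⟩
  intro u hu v hv
  obtain ⟨u₀, hu₀, p, hp⟩ := reach u hu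
  obtain ⟨v₀, hv₀, q, hq⟩ := reach v hv
  obtain ⟨r, hr⟩ := hCw u₀ hu₀ v₀ hv₀
  refine ⟨p.append (r.append q.reverse), ?_⟩
  intro x hx
  rw [SimpleGraph.Walk.mem_support_append_iff, SimpleGraph.Walk.mem_support_append_iff,
    SimpleGraph.Walk.support_reverse, List.mem_reverse] at hx
  rcases hx with hx | hx | hx
  · exact hp x hx
  · exact hCs (hr x hx)
  · exact hq x hx

lemma exists_cross {Q : Set α} :
    ∀ {x y : α} (p : Γ.Walk x y), x ∈ Q → y ∉ Q →
      ∃ a b, Γ.Adj a b ∧ a ∈ Q ∧ b ∉ Q ∧ s(a, b) ∈ p.edges := by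
  intro x y p
  induction p with
  | nil => intro hx hy; exact absurd hx hy
  | cons h q ih =>
    rename_i u c w
    intro hx hy
    by_cases hc : c ∈ Q
    · obtain ⟨a, b, hab, ha, hb, he⟩ := ih hc hy
      exact ⟨a, b, hab, ha, hb, by rw [SimpleGraph.Walk.edges_cons]; exact List.mem_cons_of_mem _ he⟩
    · exact ⟨_, _, h, hx, hc, by rw [SimpleGraph.Walk.edges_cons]; exact List.mem_cons_self⟩

lemma lift_wconn {β : Type} {Δ : SimpleGraph β} {B : β → Set α}
    (hconn : ∀ w, WConn Γ (B w))
    (hadj : ∀ ⦃w w'⦄, Δ.Adj w w' → ∃ u ∈ B w, ∃ v ∈ B w', Γ.Adj u v)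
    (hne : ∀ w, (B w).Nonempty) {X : Set β} (hX : WConn Δ X) :
    WConn Γ (⋃ w ∈ X, B w) := by
  obtain ⟨⟨w0, hw0⟩, hXw⟩ := hX
  have key : ∀ {w w' : β} (q : Δ.Walk w w'), (∀ z ∈ q.support, z ∈ X) →
      ∀ u ∈ B w, ∀ v ∈ B w', ∃ p : Γ.Walk u v, ∀ x ∈ p.support, x ∈ ⋃ w ∈ X, B w := by
    intro w w' q
    induction q with
    | nil =>
      intro hs u hu v hv
      obtain ⟨p, hp⟩ := (hconn _).2 u hu v hv
      have hwX : _ ∈ X := hs _ (by rw [SimpleGraph.Walk.support_nil]; exact List.mem_singleton_self _)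
      exact ⟨p, fun x hx => Set.mem_biUnion hwX (hp x hx)⟩
    | cons h q ih =>
      intro hs u hu v hv
      obtain ⟨u1, hu1, v1, hv1, hG⟩ := hadj h
      obtain ⟨p1, hp1⟩ := (hconn _).2 u hu u1 hu1
      obtain ⟨p2, hp2⟩ := ih (fun z hz => hs z (by rw [SimpleGraph.Walk.support_cons]; exact List.mem_cons_of_mem _ hz)) v1 hv1 v hv
      have hwX : _ ∈ X := hs _ (by rw [SimpleGraph.Walk.support_cons]; exact List.mem_cons_self)
      refine ⟨p1.append (SimpleGraph.Walk.cons hG p2), ?_⟩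
      intro x hx
      rw [SimpleGraph.Walk.mem_support_append_iff] at hx
      rcases hx with hx | hx
      · exact Set.mem_biUnion hwX (hp1 x hx)
      · rw [SimpleGraph.Walk.support_cons] at hx
        rcases List.mem_cons.mp hx with rfl | hx
        · exact Set.mem_biUnion hwX hu1
        · exact hp2 x hx
  constructor
  · obtain ⟨u0, hu0⟩ := hne w0
    exact ⟨u0, Set.mem_biUnion hw0 hu0⟩
  · intro u hu v hv
    obtain ⟨wu, hwu, hu'⟩ := Set.mem_iUnion₂.mp hu
    obtain ⟨wv, hwv, hv'⟩ := Set.mem_iUnion₂.mp hv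
    obtain ⟨q, hq⟩ := hXw wu hwu wv hwv
    exact key q hq u hu' v hv'

end BottleneckHelpers

section AvoidReach

variable {V : Type} {G : SimpleGraph V}

/-- Vertices reachable from `D` by walks avoiding the edge set `S`. -/
def AvoidReach (G : SimpleGraph V) (D : Set V) (S : Finset (Sym2 V)) : Set V :=
  {v | ∃ u ∈ D, ∃ p : G.Walk u v, ∀ e ∈ p.edges, e ∉ S}

lemma subset_avoidReach {D : Set V} {S : Finset (Sym2 V)} : D ⊆ AvoidReach G D S := by
  intro v hv
  exact ⟨v, hv, SimpleGraph.Walk.nil, fun e he => by rw [SimpleGraph.Walk.edges_nil] at he; exact absurd he List.not_mem_nil⟩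

lemma avoidReach_support {D : Set V} {S : Finset (Sym2 V)} {u v : V} (hu : u ∈ D)
    (p : G.Walk u v) (hp : ∀ e ∈ p.edges, e ∉ S) :
    ∀ x ∈ p.support, x ∈ AvoidReach G D S := by
  classical
  intro x hx
  exact ⟨u, hu, p.takeUntil x hx, fun e he => hp e (SimpleGraph.Walk.edges_takeUntil_subset _ _ he)⟩

lemma avoidReach_adj {D : Set V} {S : Finset (Sym2 V)} {v v' : V}
    (hv : v ∈ AvoidReach G D S) (hadj : G.Adj v v') (he : s(v, v') ∉ S) :
    v' ∈ AvoidReach G D S := by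
  obtain ⟨u, hu, p, hp⟩ := hv
  refine ⟨u, hu, p.concat hadj, ?_⟩
  intro e hemem
  rw [SimpleGraph.Walk.edges_concat, List.concat_eq_append, List.mem_append, List.mem_singleton] at hemem
  rcases hemem with hemem | rfl
  · exact hp e hemem
  · exact he

lemma avoidReach_wconn {D : Set V} {S : Finset (Sym2 V)} (hD : WConn G D) :
    WConn G (AvoidReach G D S) := by
  refine ⟨hD.1.mono subset_avoidReach, ?_⟩
  intro u hu v hv
  obtain ⟨u0, hu0, pu, hpu⟩ := hu
  obtain ⟨v0, hv0, pv, hpv⟩ := hv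
  obtain ⟨q, hq⟩ := hD.2 u0 hu0 v0 hv0
  refine ⟨pu.reverse.append (q.append pv), ?_⟩
  intro x hx
  rw [SimpleGraph.Walk.mem_support_append_iff, SimpleGraph.Walk.mem_support_append_iff,
    SimpleGraph.Walk.support_reverse, List.mem_reverse] at hx
  rcases hx with hx | hx | hx
  · exact avoidReach_support hu0 pu hpu x hx
  · exact subset_avoidReach (hq x hx)
  · exact avoidReach_support hv0 pv hpv x hx

/-- One stage of the iterated cutting construction. -/
structure Stage (G : SimpleGraph V) (X' Y' : Set V) (n : ℕ) where
  A : Set V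
  conn : WConn G A
  subX : X' ⊆ A
  disjY : ∀ v ∈ Y', v ∉ A
  S : Finset (Sym2 V)
  cardS : S.card ≤ n
  bdry : ∀ ⦃u v : V⦄, u ∈ A → v ∉ A → G.Adj u v → s(u, v) ∈ S

lemma stage_exists {n : ℕ} {X' Y' : Set V} (hG : EdgeBottlenecked G n)
    (hY : ConnSet G Y') (D : Set V) (hD : WConn G D) (hDX : X' ⊆ D)
    (hDY : ∀ v ∈ Y', v ∉ D) :
    ∃ st : Stage G X' Y' n, D ⊆ st.A := by
  classical
  have hdisj : Disjoint D Y' := Set.disjoint_left.mpr (fun a haD haY => hDY a haY haD)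
  obtain ⟨S, hcard, hcut⟩ := hG D Y' hdisj ((wconn_iff G D).mpr hD) hY
  refine ⟨⟨AvoidReach G D S, avoidReach_wconn hD, hDX.trans subset_avoidReach, ?_, S, hcard, ?_⟩,
    subset_avoidReach⟩
  · intro v hvY hvA
    obtain ⟨u, hu, p, hp⟩ := hvA
    obtain ⟨e, heS, hep⟩ := hcut p.bypass hu hvY p.bypass_isPath
    exact hp e (p.edges_bypass_subset hep) heS
  · intro u v huA hvA hadj
    by_contra hS
    exact hvA (avoidReach_adj huA hadj hS)

end AvoidReach

noncomputable def chooseSeq {σ : Type} {R : σ → σ → Prop} (h : ∀ s, ∃ t, R s t) (s0 : σ) : ℕ → σ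
  | 0 => s0
  | k + 1 => (h (chooseSeq h s0 k)).choose

lemma chooseSeq_succ {σ : Type} {R : σ → σ → Prop} (h : ∀ s, ∃ t, R s t) (s0 : σ) (k : ℕ) :
    R (chooseSeq h s0 k) (chooseSeq h s0 (k + 1)) := (h _).choose_spec

/-- For every `n`, a graph `G` is `n`-edge bottlenecked iff every minor of `G`
is `n`-edge bottlenecked. -/
theorem bottlenecked_iff_minors_bottlenecked (G : SimpleGraph V) (n : ℕ) :
    EdgeBottlenecked G n ↔
      ∀ (W : Type) (H : SimpleGraph W), IsMinor G H → EdgeBottlenecked H n := by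
  constructor
  · intro hG W H hminor X Y hXY hX hY
    classical
    obtain ⟨B, hBne, hBconn, hBdisj, hBadj⟩ := hminor
    have hBw : ∀ w, WConn G (B w) := fun w => (wconn_iff G (B w)).mp (hBconn w)
    have wX : WConn H X := (wconn_iff H X).mp hX
    have wY : WConn H Y := (wconn_iff H Y).mp hY
    set X' : Set V := ⋃ w ∈ X, B w with hX'def
    set Y' : Set V := ⋃ w ∈ Y, B w with hY'def
    have wX' : WConn G X' := lift_wconn hBw hBadj hBne wX
    have wY' : WConn G Y' := lift_wconn hBw hBadj hBne wY
    have hY'conn : ConnSet G Y' := (wconn_iff G Y').mpr wY'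
    have hbridge : ∀ {w y : W} {v : V}, v ∈ B w → v ∈ B y → w = y := by
      intro w y v hw hy
      by_contra hne
      exact (Set.disjoint_left.mp (hBdisj w y hne) hw) hy
    have hX'Y' : ∀ v ∈ Y', v ∉ X' := by
      intro v hvY hvX
      obtain ⟨y, hy, hvy⟩ := Set.mem_iUnion₂.mp hvY
      obtain ⟨w, hw, hvw⟩ := Set.mem_iUnion₂.mp hvX
      have hwy := hbridge hvw hvy
      exact Set.disjoint_left.mp hXY hw (hwy ▸ hy)
    have hstep : ∀ st : Stage G X' Y' n,
        ∃ st' : Stage G X' Y' n,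
          (st.A ∪ ⋃ w ∈ {w : W | (B w ∩ st.A).Nonempty}, B w) ⊆ st'.A := by
      intro st
      have hDw : WConn G (st.A ∪ ⋃ w ∈ {w : W | (B w ∩ st.A).Nonempty}, B w) :=
        wconn_union st.conn (fun w _ => hBw w) (fun w hw => hw)
      refine stage_exists hG hY'conn _ hDw (st.subX.trans Set.subset_union_left) ?_
      intro v hvY hvD
      rcases hvD with hvA | hvU
      · exact st.disjY v hvY hvA
      · obtain ⟨w, hw, hvw⟩ := Set.mem_iUnion₂.mp hvU
        obtain ⟨y, hy, hvy⟩ := Set.mem_iUnion₂.mp hvY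
        have hwy := hbridge hvw hvy
        obtain ⟨z, hzB, hzA⟩ := hw
        exact st.disjY z (Set.mem_biUnion hy (hwy ▸ hzB)) hzA
    obtain ⟨st0, -⟩ := stage_exists hG hY'conn X' wX' subset_rfl hX'Y'
    set seq := chooseSeq hstep st0 with hseqdef
    have hseqsucc : ∀ k, ((seq k).A ∪ ⋃ w ∈ {w : W | (B w ∩ (seq k).A).Nonempty}, B w)
        ⊆ (seq (k + 1)).A := fun k => chooseSeq_succ hstep st0 k
    have hmono1 : ∀ k, (seq k).A ⊆ (seq (k + 1)).A :=
      fun k => Set.subset_union_left.trans (hseqsucc k)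
    have hmonole : ∀ {k m : ℕ}, k ≤ m → (seq k).A ⊆ (seq m).A := by
      intro k m h
      induction h with
      | refl => exact subset_rfl
      | step _ ih => exact ih.trans (hmono1 _)
    set Ainf : Set V := ⋃ k, (seq k).A with hAinfdef
    have hsubinf : ∀ k, (seq k).A ⊆ Ainf := fun k => Set.subset_iUnion (fun k => (seq k).A) k
    have hYinf : ∀ v ∈ Y', v ∉ Ainf := by
      intro v hv hvA
      obtain ⟨k, hk⟩ := Set.mem_iUnion.mp hvA
      exact (seq k).disjY v hv hk
    have hXinf : X' ⊆ Ainf := (seq 0).subX.trans (hsubinf 0)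
    have hpure : ∀ w : W, (B w ∩ Ainf).Nonempty → B w ⊆ Ainf := by
      rintro w ⟨z, hzB, hzA⟩
      obtain ⟨k, hk⟩ := Set.mem_iUnion.mp hzA
      intro x hx
      exact hsubinf (k + 1)
        (hseqsucc k (Or.inr (Set.mem_biUnion (show (B w ∩ (seq k).A).Nonempty from ⟨z, hzB, hk⟩) hx)))
    have hcommon : ∀ T : Finset (Sym2 V),
        (∀ e ∈ T, ∃ u v : V, e = s(u, v) ∧ u ∈ Ainf ∧ v ∉ Ainf ∧ G.Adj u v) → T.card ≤ n := by
      intro T hT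
      have key : ∀ T' : Finset (Sym2 V),
          (∀ e ∈ T', ∃ u v : V, e = s(u, v) ∧ u ∈ Ainf ∧ v ∉ Ainf ∧ G.Adj u v) →
          ∃ k, ∀ m, k ≤ m → ∀ e ∈ T', e ∈ (seq m).S := by
        intro T'
        induction T' using Finset.induction_on with
        | empty => intro _; exact ⟨0, by simp⟩
        | @insert a s ha ih =>
          intro h
          obtain ⟨k1, hk1⟩ := ih (fun e he => h e (Finset.mem_insert_of_mem he))
          obtain ⟨u, v, hae, hu, hv, huv⟩ := h a (Finset.mem_insert_self a s)
          obtain ⟨k2, hk2⟩ := Set.mem_iUnion.mp hu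
          refine ⟨max k1 k2, ?_⟩
          intro m hm e he
          rcases Finset.mem_insert.mp he with rfl | he
          · rw [hae]
            exact (seq m).bdry (hmonole (le_trans (le_max_right _ _) hm) hk2)
              (fun hvm => hv (hsubinf m hvm)) huv
          · exact hk1 m (le_trans (le_max_left _ _) hm) e he
      obtain ⟨k, hk⟩ := key T hT
      calc T.card ≤ (seq k).S.card := Finset.card_le_card (fun e he => hk k le_rfl e he)
        _ ≤ n := (seq k).cardS
    have hTW : ∀ T : Finset (Sym2 W),
        (∀ z ∈ T, ∃ w w' : W, ∃ u v : V, z = s(w, w') ∧ u ∈ B w ∧ v ∈ B w' ∧ G.Adj u v ∧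
          u ∈ Ainf ∧ v ∉ Ainf) → T.card ≤ n := by
      intro T hT
      choose fw fw' fu fv hz hu hv hadje hui hvi using hT
      have hinj : Set.InjOn (fun z : {x // x ∈ T} => s(fu z.1 z.2, fv z.1 z.2)) ↑T.attach := by
        rintro ⟨z1, hz1⟩ - ⟨z2, hz2⟩ - heq
        simp only at heq
        have huu : fu z1 hz1 = fu z2 hz2 ∧ fv z1 hz1 = fv z2 hz2 := by
          rcases Sym2.eq_iff.mp heq with ⟨h1, h2⟩ | ⟨h1, h2⟩
          · exact ⟨h1, h2⟩
          · exact absurd (h1 ▸ hui z1 hz1) (hvi z2 hz2)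
        have hwa : fw z1 hz1 = fw z2 hz2 :=
          hbridge (hu z1 hz1) (by rw [huu.1]; exact hu z2 hz2)
        have hwb : fw' z1 hz1 = fw' z2 hz2 :=
          hbridge (hv z1 hz1) (by rw [huu.2]; exact hv z2 hz2)
        apply Subtype.ext
        exact (hz z1 hz1).trans (by rw [hwa, hwb]; exact (hz z2 hz2).symm)
      have h1 : (T.attach.image (fun z : {x // x ∈ T} => s(fu z.1 z.2, fv z.1 z.2))).card ≤ n := by
        apply hcommon
        intro e he
        obtain ⟨z, hzmem, rfl⟩ := Finset.mem_image.mp he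
        exact ⟨_, _, rfl, hui z.1 z.2, hvi z.1 z.2, hadje z.1 z.2⟩
      have h2 : (T.attach.image (fun z : {x // x ∈ T} => s(fu z.1 z.2, fv z.1 z.2))).card = T.card := by
        rw [Finset.card_image_of_injOn hinj, Finset.card_attach]
      omega
    have hCfin : Set.Finite {z : Sym2 W | ∃ w w' : W, ∃ u v : V, z = s(w, w') ∧ u ∈ B w ∧
        v ∈ B w' ∧ G.Adj u v ∧ u ∈ Ainf ∧ v ∉ Ainf} := by
      by_contra hinf
      obtain ⟨T, hTC, hcard⟩ := Set.Infinite.exists_subset_card_eq hinf (n + 1)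
      have := hTW T (fun z hz => hTC hz)
      omega
    refine ⟨hCfin.toFinset, ?_, ?_⟩
    · exact hTW _ (fun z hz => (Set.Finite.mem_toFinset hCfin).mp hz)
    · intro x y p hx hy _
      have hxQ : B x ⊆ Ainf := fun t ht => hXinf (Set.mem_biUnion hx ht)
      have hyQ : ¬ B y ⊆ Ainf := by
        intro hsub
        obtain ⟨t, ht⟩ := hBne y
        exact hYinf t (Set.mem_biUnion hy ht) (hsub ht)
      obtain ⟨a, b, hab, haQ, hbQ, he⟩ := exists_cross (Q := {w : W | B w ⊆ Ainf}) p hxQ hyQ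
      obtain ⟨u, hu, v, hv, huv⟩ := hBadj hab
      have hvA : v ∉ Ainf := fun hvA => hbQ (hpure b ⟨v, hv, hvA⟩)
      refine ⟨s(a, b), ?_, he⟩
      rw [Set.Finite.mem_toFinset]
      exact ⟨a, b, u, v, rfl, hu, hv, huv, haQ hu, hvA⟩
  · intro h
    refine h V G ⟨fun v => {v}, fun v => ⟨v, rfl⟩, ?_, ?_, ?_⟩
    · intro v
      refine (wconn_iff G {v}).mpr ⟨⟨v, rfl⟩, ?_⟩
      intro u hu u' hu'
      rcases hu with rfl
      rcases hu' with rfl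
      exact ⟨SimpleGraph.Walk.nil, fun x hx => by
        rw [SimpleGraph.Walk.support_nil, List.mem_singleton] at hx; exact hx⟩
    · intro w w' hne
      exact Set.disjoint_singleton.mpr hne
    · intro w w' hadj
      exact ⟨w, rfl, w', rfl, hadj⟩
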